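/- For n ∈ {2,3}, the function h(k) = 2/n + ln((k + n/2 - 1)/(n/2)) − (2/n)·√(k(k+n-1)/n), viewed as a function of real k ≥ 4, is nonincreasing in k and satisfies h(4) ≤ 0; hence h(k) ≤ 0 for all real k ≥ 4. -/

import Mathlib

theorem stmt_3 (n : ℝ) (hn : n = 2 ∨ n = 3)
    (h : ℝ → ℝ)
    (hdef : ∀ k : ℝ, h k =
      2 / n + Real.log ((k + n / 2 - 1) / (n / 2)) -
        (2 / n) * Real.sqrt (k * (k + n - 1) / n)) :
    AntitoneOn h (Set.Ici (4 : ℝ)) ∧ h 4 ≤ 0 ∧ ∀ k : ℝ, 4 ≤ k → h k ≤ 0 := by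
  obtain ⟨h2, h3⟩ : (2:ℝ) ≤ n ∧ n ≤ 3 := by rcases hn with rfl | rfl <;> norm_num
  have hn0 : (0:ℝ) < n := by linarith
  have hfun : h = fun k => 2 / n + Real.log ((k + n / 2 - 1) / (n / 2)) -
      (2 / n) * Real.sqrt (k * (k + n - 1) / n) := funext hdef
  -- derivative of h at every x ≥ 4
  have hD : ∀ x : ℝ, 4 ≤ x → HasDerivAt h
      ((1 / (n / 2)) / ((x + n / 2 - 1) / (n / 2)) -
        2 / n * ((1 * (x + n - 1) + x * 1) / n / (2 * Real.sqrt (x * (x + n - 1) / n)))) x := by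
    intro x hx
    have hA : (0:ℝ) < x + n / 2 - 1 := by linarith
    have hg : (0:ℝ) < x * (x + n - 1) / n := by
      apply div_pos _ hn0
      apply mul_pos (by linarith) (by linarith)
    have d1 : HasDerivAt (fun k : ℝ => (k + n / 2 - 1) / (n / 2)) (1 / (n / 2)) x :=
      (((hasDerivAt_id x).add_const (n / 2)).sub_const 1).div_const (n / 2)
    have d2 : HasDerivAt (fun k : ℝ => Real.log ((k + n / 2 - 1) / (n / 2)))
        ((1 / (n / 2)) / ((x + n / 2 - 1) / (n / 2))) x :=
      d1.log (by positivity)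
    have d3 : HasDerivAt (fun k : ℝ => k * (k + n - 1) / n)
        ((1 * (x + n - 1) + x * 1) / n) x := by
      have := ((hasDerivAt_id x).mul ((hasDerivAt_id x).add_const (n - 1))).div_const n
      simpa only [id_eq, Pi.mul_apply, ← add_sub_assoc] using this
    have d4 : HasDerivAt (fun k : ℝ => Real.sqrt (k * (k + n - 1) / n))
        ((1 * (x + n - 1) + x * 1) / n / (2 * Real.sqrt (x * (x + n - 1) / n))) x :=
      d3.sqrt (ne_of_gt hg)
    rw [hfun]
    exact (d2.const_add (2 / n)).sub (d4.const_mul (2 / n))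
  -- the derivative is nonpositive on (4, ∞)
  have hDle : ∀ x : ℝ, 4 ≤ x →
      (1 / (n / 2)) / ((x + n / 2 - 1) / (n / 2)) -
        2 / n * ((1 * (x + n - 1) + x * 1) / n / (2 * Real.sqrt (x * (x + n - 1) / n))) ≤ 0 := by
    intro x hx
    have hA : (0:ℝ) < x + n / 2 - 1 := by linarith
    have hg : (0:ℝ) < x * (x + n - 1) / n := by
      apply div_pos _ hn0
      apply mul_pos (by linarith) (by linarith)
    set s := Real.sqrt (x * (x + n - 1) / n) with hs_def
    have hs : 0 < s := Real.sqrt_pos.mpr hg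
    have hs2 : s ^ 2 = x * (x + n - 1) / n := Real.sq_sqrt hg.le
    have key : n ^ 2 * s ≤ (x + n / 2 - 1) * (2 * x + n - 1) := by
      have hsq : (n ^ 2 * s) ^ 2 ≤ ((x + n / 2 - 1) * (2 * x + n - 1)) ^ 2 := by
        have : (n ^ 2 * s) ^ 2 = n ^ 3 * (x * (x + n - 1)) := by
          rw [mul_pow, hs2]; field_simp
        rw [this]
        have hX : (0:ℝ) < x * (x + n - 1) :=
          mul_pos (by linarith) (by linarith)
        have q1 : 4 * (x * (x + n - 1)) ≤ (2 * x + n - 1) ^ 2 := by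
          nlinarith [sq_nonneg (n - 1)]
        have q4 : (16:ℝ) ≤ (x + n / 2 - 1) ^ 2 := by nlinarith
        calc n ^ 3 * (x * (x + n - 1)) ≤ 27 * (x * (x + n - 1)) := by
              have hc : n ^ 3 ≤ 27 := by nlinarith [sq_nonneg n, sq_nonneg (n - 3)]
              exact mul_le_mul_of_nonneg_right hc hX.le
          _ ≤ 27 / 4 * (2 * x + n - 1) ^ 2 := by nlinarith [q1]
          _ ≤ 16 * (2 * x + n - 1) ^ 2 := by nlinarith [sq_nonneg (2 * x + n - 1)]
          _ ≤ (x + n / 2 - 1) ^ 2 * (2 * x + n - 1) ^ 2 := by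
              nlinarith [q4, sq_nonneg (2 * x + n - 1)]
          _ = ((x + n / 2 - 1) * (2 * x + n - 1)) ^ 2 := by ring
      exact le_of_pow_le_pow_left₀ two_ne_zero
        (mul_nonneg (by linarith) (by linarith)) hsq
    have e1 : (1 / (n / 2)) / ((x + n / 2 - 1) / (n / 2)) = 1 / (x + n / 2 - 1) := by
      field_simp
    have e2 : 2 / n * ((1 * (x + n - 1) + x * 1) / n / (2 * s))
        = (2 * x + n - 1) / (n ^ 2 * s) := by
      field_simp; ring
    rw [e1, e2, sub_nonpos, div_le_div_iff₀ hA (by positivity)]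
    nlinarith [key]
  have hanti : AntitoneOn h (Set.Ici (4:ℝ)) := by
    apply antitoneOn_of_deriv_nonpos (convex_Ici 4)
    · intro x hx
      exact (hD x hx).continuousAt.continuousWithinAt
    · intro x hx
      rw [interior_Ici] at hx
      exact (hD x (le_of_lt hx)).differentiableAt.differentiableWithinAt
    · intro x hx
      rw [interior_Ici] at hx
      rw [(hD x (le_of_lt hx)).deriv]
      exact hDle x (le_of_lt hx)
  have h4 : h 4 ≤ 0 := by
    rw [hdef]
    rcases hn with rfl | rfl
    · norm_num
      have l2 : Real.log 2 < 0.6931471808 := Real.log_two_lt_d9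
      have l4 : Real.log 4 ≤ 1.39 := by
        rw [show (4:ℝ) = 2 ^ 2 by norm_num, Real.log_pow]
        push_cast
        nlinarith
      have s10 : (2.39:ℝ) ≤ Real.sqrt 10 := by
        apply Real.le_sqrt_of_sq_le
        norm_num
      linarith
    · have e : ((4:ℝ) + 3 / 2 - 1) / (3 / 2) = 3 := by norm_num
      have e' : (4:ℝ) * (4 + 3 - 1) / 3 = 8 := by norm_num
      rw [e, e']
      have he : (2.7182818283:ℝ) < Real.exp 1 := Real.exp_one_gt_d9
      have l3 : Real.log 3 ≤ 1.104 := by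
        have h1 : Real.log (3 / Real.exp 1) ≤ 3 / Real.exp 1 - 1 :=
          Real.log_le_sub_one_of_pos (by positivity)
        have h2 : Real.log (3 / Real.exp 1) = Real.log 3 - 1 := by
          rw [Real.log_div (by norm_num) (Real.exp_ne_zero 1), Real.log_exp]
        have h3 : (3:ℝ) / Real.exp 1 ≤ 3 / 2.7182818283 :=
          div_le_div_of_nonneg_left (by norm_num) (by norm_num) he.le
        have : (3:ℝ) / 2.7182818283 ≤ 1.104 := by norm_num
        linarith
      have s8 : (2.82:ℝ) ≤ Real.sqrt 8 := by
        apply Real.le_sqrt_of_sq_le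
        norm_num
      nlinarith
  refine ⟨hanti, h4, fun k hk => ?_⟩
  calc h k ≤ h 4 := hanti (by norm_num) hk hk
    _ ≤ 0 := h4
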